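/- Let r ≥ 2 be an integer. If a Steiner system S(2, r, n) exists, then there is a bipartite finite simple graph G of girth at least 6 with χ_r(G) ≥ n; namely, the Levi graph of the Steiner system is bipartite, has girth at least 6, and satisfies χ_r(G) ≥ n. -/

import Mathlib

open SimpleGraph

/-- A proper coloring `φ : V → Fin k` is `r`-hued if every vertex sees at least
`min r (deg v)` distinct colors on its neighborhood. -/
def IsRHuedColoring {V : Type*} (G : SimpleGraph V) (r k : ℕ) (φ : V → Fin k) : Prop :=
  (∀ ⦃u v⦄, G.Adj u v → φ u ≠ φ v) ∧
  ∀ v : V, min r (G.neighborSet v).ncard ≤ (φ '' G.neighborSet v).ncard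

/-- The `r`-hued chromatic number of a graph: the least `k` admitting an `r`-hued
`k`-coloring. -/
noncomputable def rHuedChromNum {V : Type*} (G : SimpleGraph V) (r : ℕ) : ℕ :=
  sInf {k | ∃ φ : V → Fin k, IsRHuedColoring G r k φ}

/-- The maximum degree of a finite simple graph. -/
noncomputable def maxDeg {V : Type*} [Fintype V] (G : SimpleGraph V) : ℕ :=
  Finset.univ.sup fun v => (G.neighborSet v).ncard

/-- A Steiner system `S(2, r, n)`: `V` has `n` elements, the blocks are `r`-element
subsets of `V`, and every `2`-element subset of `V` lies in exactly one block. -/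
def IsSteinerSystem {α : Type*} (r n : ℕ) (V : Finset α) (B : Finset (Finset α)) : Prop :=
  V.card = n ∧ (∀ b ∈ B, b ⊆ V ∧ b.card = r) ∧
  ∀ p : Finset α, p ⊆ V → p.card = 2 → ∃! b, b ∈ B ∧ p ⊆ b

/-- The Levi (incidence) graph of a set system: points on the left, blocks on the right,
with an edge when the point lies in the block. -/
def leviGraph {α : Type*} (V : Finset α) (B : Finset (Finset α)) :
    SimpleGraph ({x // x ∈ V} ⊕ {b // b ∈ B}) :=
  SimpleGraph.fromRel fun u w =>
    match u, w with
    | Sum.inl x, Sum.inr b => (x : α) ∈ (b : Finset α)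
    | _, _ => False

section Aux

variable {α : Type*} {V : Finset α} {B : Finset (Finset α)}

lemma levi_adj_inl_inr (x : {x // x ∈ V}) (b : {b // b ∈ B}) :
    (leviGraph V B).Adj (Sum.inl x) (Sum.inr b) ↔ (x : α) ∈ (b : Finset α) := by
  simp [leviGraph, fromRel_adj]

lemma levi_adj_inr_inl (x : {x // x ∈ V}) (b : {b // b ∈ B}) :
    (leviGraph V B).Adj (Sum.inr b) (Sum.inl x) ↔ (x : α) ∈ (b : Finset α) := by
  rw [SimpleGraph.adj_comm]; exact levi_adj_inl_inr x b

lemma levi_not_adj_inl_inl (x y : {x // x ∈ V}) :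
    ¬ (leviGraph V B).Adj (Sum.inl x) (Sum.inl y) := by
  simp [leviGraph, fromRel_adj]

lemma levi_not_adj_inr_inr (b c : {b // b ∈ B}) :
    ¬ (leviGraph V B).Adj (Sum.inr b) (Sum.inr c) := by
  simp [leviGraph, fromRel_adj]

/-- parity function -/
def leviPar : ({x // x ∈ V} ⊕ {b // b ∈ B}) → ZMod 2 := Sum.elim (fun _ => 0) (fun _ => 1)

lemma levi_par_adj {u v : {x // x ∈ V} ⊕ {b // b ∈ B}} (h : (leviGraph V B).Adj u v) :
    leviPar u + leviPar v = 1 := by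
  match u, v with
  | Sum.inl x, Sum.inl y => exact absurd h (levi_not_adj_inl_inl x y)
  | Sum.inr b, Sum.inr c => exact absurd h (levi_not_adj_inr_inr b c)
  | Sum.inl x, Sum.inr b => simp [leviPar]
  | Sum.inr b, Sum.inl x => simp [leviPar]

lemma levi_walk_parity {u v : {x // x ∈ V} ⊕ {b // b ∈ B}} (w : (leviGraph V B).Walk u v) :
    (w.length : ZMod 2) = leviPar u + leviPar v := by
  induction w with
  | nil =>
      rename_i a
      match a with
      | Sum.inl x => simp [leviPar]
      | Sum.inr b =>
          simp only [SimpleGraph.Walk.length_nil, Nat.cast_zero, leviPar, Sum.elim_inr]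
          decide
  | cons h w ih =>
      rename_i a b c
      have hab := levi_par_adj h
      simp only [SimpleGraph.Walk.length_cons, Nat.cast_add, Nat.cast_one, ih]
      exact (by decide : ∀ p q c : ZMod 2, p + q = 1 → q + c + 1 = p + c) _ _ _ hab

/-- The key uniqueness consequence: two distinct points lie in at most one common block. -/
lemma levi_unique_block {r n : ℕ} (hS : IsSteinerSystem r n V B)
    (x y : {x // x ∈ V}) (hxy : x ≠ y) (b c : {b // b ∈ B})
    (hxb : (x : α) ∈ (b : Finset α)) (hyb : (y : α) ∈ (b : Finset α))
    (hxc : (x : α) ∈ (c : Finset α)) (hyc : (y : α) ∈ (c : Finset α)) : b = c := by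
  classical
  have hvals : (x : α) ≠ (y : α) := fun h => hxy (Subtype.ext h)
  have hp : ({(x : α), (y : α)} : Finset α) ⊆ V := by
    intro z hz
    simp only [Finset.mem_insert, Finset.mem_singleton] at hz
    rcases hz with rfl | rfl
    · exact x.2
    · exact y.2
  have hc2 : ({(x : α), (y : α)} : Finset α).card = 2 := Finset.card_pair hvals
  obtain ⟨b0, _, hb0⟩ := hS.2.2 _ hp hc2
  have h1 : (b : Finset α) = b0 := hb0 _ ⟨b.2, by
    intro z hz; simp only [Finset.mem_insert, Finset.mem_singleton] at hz
    rcases hz with rfl | rfl <;> assumption⟩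
  have h2 : (c : Finset α) = b0 := hb0 _ ⟨c.2, by
    intro z hz; simp only [Finset.mem_insert, Finset.mem_singleton] at hz
    rcases hz with rfl | rfl <;> assumption⟩
  exact Subtype.ext (h1.trans h2.symm)

lemma levi_no_four_cycle {r n : ℕ} (hS : IsSteinerSystem r n V B)
    (a : {x // x ∈ V} ⊕ {b // b ∈ B}) (w : (leviGraph V B).Walk a a)
    (hc : w.IsCycle) : w.length ≠ 4 := by
  intro hlen
  cases w with
  | nil => simp at hlen
  | cons h1 w1 =>
  rename_i b
  cases w1 with
  | nil => simp at hlen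
  | cons h2 w2 =>
  rename_i c
  cases w2 with
  | nil => simp at hlen
  | cons h3 w3 =>
  rename_i d
  cases w3 with
  | nil => simp at hlen
  | cons h4 w4 =>
  rename_i e
  cases w4 with
  | cons h5 w5 => simp only [SimpleGraph.Walk.length_cons] at hlen; omega
  | nil =>
  -- edges: h1 : Adj a b, h2 : Adj b c, h3 : Adj c d, h4 : Adj d a
  clear hlen
  have hnd := hc.2
  simp only [SimpleGraph.Walk.support_cons, SimpleGraph.Walk.support_nil, List.tail_cons,
    List.nodup_cons, List.mem_cons, List.mem_singleton, List.not_mem_nil,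
    List.nodup_nil] at hnd
  have hbd : b ≠ d := by tauto
  have hac : a ≠ c := by tauto
  clear hnd hc
  rcases a with x | bl
  · rcases b with x' | b1
    · exact levi_not_adj_inl_inl _ _ h1
    · rcases c with y | b2'
      · rcases d with y' | b2
        · exact levi_not_adj_inl_inl _ _ h3
        · have e1 := (levi_adj_inl_inr x b1).1 h1
          have e2 := (levi_adj_inr_inl y b1).1 h2
          have e3 := (levi_adj_inl_inr y b2).1 h3
          have e4 := (levi_adj_inr_inl x b2).1 h4
          have hxy : x ≠ y := fun h => hac (by rw [h])
          have hb12 : b1 ≠ b2 := fun h => hbd (by rw [h])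
          exact hb12 (levi_unique_block hS x y hxy b1 b2 e1 e2 e4 e3)
      · exact levi_not_adj_inr_inr _ _ h2
  · rcases b with x | b1'
    · rcases c with y' | b2
      · exact levi_not_adj_inl_inl _ _ h2
      · rcases d with y | b2'
        · have e1 := (levi_adj_inr_inl x bl).1 h1
          have e2 := (levi_adj_inl_inr x b2).1 h2
          have e3 := (levi_adj_inr_inl y b2).1 h3
          have e4 := (levi_adj_inl_inr y bl).1 h4
          have hxy : x ≠ y := fun h => hbd (by rw [h])
          have hb12 : bl ≠ b2 := fun h => hac (by rw [h])
          exact hb12 (levi_unique_block hS x y hxy bl b2 e1 e4 e2 e3)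
        · exact levi_not_adj_inr_inr _ _ h3
    · exact levi_not_adj_inr_inr _ _ h1

lemma levi_neighborSet_inr (b : {b // b ∈ B}) :
    (leviGraph V B).neighborSet (Sum.inr b) =
      Sum.inl '' {x : {x // x ∈ V} | (x : α) ∈ (b : Finset α)} := by
  ext u
  match u with
  | Sum.inl x => simp [SimpleGraph.mem_neighborSet, levi_adj_inr_inl]
  | Sum.inr c => simp [SimpleGraph.mem_neighborSet, levi_not_adj_inr_inr _ _]

end Aux

/-- If a Steiner system `S(2, r, n)` with `r ≥ 2` exists, then its Levi graph is a
bipartite graph of girth at least `6` whose `r`-hued chromatic number is at least `n`. -/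
theorem steiner_levi_bipartite_girth_rHued {α : Type*} {r n : ℕ} (hr : 2 ≤ r)
    (V : Finset α) (B : Finset (Finset α)) (hS : IsSteinerSystem r n V B) :
    (leviGraph V B).Colorable 2 ∧ (6 : ℕ∞) ≤ (leviGraph V B).egirth ∧
      n ≤ rHuedChromNum (leviGraph V B) r := by
  refine ⟨?_, ?_, ?_⟩
  · -- bipartite: 2-colorable
    refine ⟨SimpleGraph.Coloring.mk (fun u => match u with | Sum.inl _ => 0 | Sum.inr _ => 1) ?_⟩
    intro u v h
    match u, v with
    | Sum.inl x, Sum.inl y => exact absurd h (levi_not_adj_inl_inl x y)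
    | Sum.inr b, Sum.inr c => exact absurd h (levi_not_adj_inr_inr b c)
    | Sum.inl x, Sum.inr b => simp
    | Sum.inr b, Sum.inl x => simp
  · -- girth ≥ 6
    rw [le_egirth]
    intro a w hw
    have h3 : 3 ≤ w.length := hw.three_le_length
    have heven : 2 ∣ w.length := by
      have := levi_walk_parity w
      have hz : (w.length : ZMod 2) = 0 := by
        rw [this]
        match a with
        | Sum.inl x => simp [leviPar]
        | Sum.inr b =>
            simp only [leviPar, Sum.elim_inr]
            decide
      exact (ZMod.natCast_eq_zero_iff _ _).1 hz
    have h4 : w.length ≠ 4 := levi_no_four_cycle hS a w hw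
    have h6 : 6 ≤ w.length := by omega
    exact_mod_cast Nat.cast_le.2 h6
  · -- r-hued chromatic number ≥ n
    apply le_csInf
    · -- nonempty: the injective coloring
      classical
      refine ⟨Fintype.card ({x // x ∈ V} ⊕ {b // b ∈ B}),
        fun u => (Fintype.equivFin _) u, ?_, ?_⟩
      · intro u v h hEq
        exact h.ne ((Fintype.equivFin _).injective hEq)
      · intro v
        rw [Set.ncard_image_of_injective _ (Fintype.equivFin _).injective]
        exact min_le_right _ _
    · rintro k ⟨φ, hproper, hhue⟩
      classical
      -- φ ∘ inl is injective
      have hinj : Function.Injective (fun x : {x // x ∈ V} => φ (Sum.inl x)) := by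
        intro x y hEq
        by_contra hxy
        have hvals : (x : α) ≠ (y : α) := fun h => hxy (Subtype.ext h)
        have hp : ({(x : α), (y : α)} : Finset α) ⊆ V := by
          intro z hz
          simp only [Finset.mem_insert, Finset.mem_singleton] at hz
          rcases hz with rfl | rfl
          · exact x.2
          · exact y.2
        obtain ⟨b0, ⟨hb0B, hb0p⟩, _⟩ := hS.2.2 _ hp (Finset.card_pair hvals)
        set bb : {b // b ∈ B} := ⟨b0, hb0B⟩ with hbb
        have hxb : (x : α) ∈ b0 := hb0p (by simp)
        have hyb : (y : α) ∈ b0 := hb0p (by simp)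
        -- the neighbor set of inr bb has ncard r
        have hNS := levi_neighborSet_inr (V := V) (B := B) bb
        set S : Set {x // x ∈ V} := {z : {x // x ∈ V} | (z : α) ∈ b0} with hSdef
        have hSncard : S.ncard = r := by
          have : S.ncard = Nat.card S := Nat.card_coe_set_eq S ▸ rfl
          rw [this]
          have e : S ≃ {z // z ∈ b0} := by
            refine ⟨fun z => ⟨(z : {x // x ∈ V}), z.2⟩,
              fun z => ⟨⟨(z : α), (hS.2.1 b0 hb0B).1 z.2⟩, z.2⟩, ?_, ?_⟩
            · intro z; ext; rfl
            · intro z; rfl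
          rw [Nat.card_congr e, Nat.card_eq_fintype_card, Fintype.card_coe]
          exact (hS.2.1 b0 hb0B).2
        have hNcard : ((leviGraph V B).neighborSet (Sum.inr bb)).ncard = r := by
          rw [hNS, Set.ncard_image_of_injective _ Sum.inl_injective]
          exact hSncard
        have hhueb := hhue (Sum.inr bb)
        rw [hNcard, min_self] at hhueb
        -- but the image misses a color since φ (inl x) = φ (inl y)
        have hxS : Sum.inl x ∈ (leviGraph V B).neighborSet (Sum.inr bb) := by
          rw [hNS]; exact ⟨x, hxb, rfl⟩
        have hyS : Sum.inl y ∈ (leviGraph V B).neighborSet (Sum.inr bb) := by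
          rw [hNS]; exact ⟨y, hyb, rfl⟩
        have himg : φ '' ((leviGraph V B).neighborSet (Sum.inr bb)) =
            φ '' ((leviGraph V B).neighborSet (Sum.inr bb) \ {Sum.inl y}) := by
          apply Set.Subset.antisymm
          · rintro cc ⟨u, hu, rfl⟩
            by_cases hu' : u = Sum.inl y
            · subst hu'
              refine ⟨Sum.inl x, ⟨hxS, ?_⟩, ?_⟩
              · simp only [Set.mem_singleton_iff]
                exact fun h => hxy (Sum.inl_injective h)
              · exact hEq
            · exact ⟨u, ⟨hu, hu'⟩, rfl⟩
          · exact Set.image_mono Set.diff_subset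
        have hlt : (φ '' ((leviGraph V B).neighborSet (Sum.inr bb))).ncard ≤ r - 1 := by
          rw [himg]
          calc (φ '' ((leviGraph V B).neighborSet (Sum.inr bb) \ {Sum.inl y})).ncard
              ≤ ((leviGraph V B).neighborSet (Sum.inr bb) \ {Sum.inl y}).ncard :=
                Set.ncard_image_le (Set.toFinite _)
            _ = r - 1 := by
                rw [Set.ncard_diff_singleton_of_mem hyS, hNcard]
        omega
      have := Fintype.card_le_of_injective _ hinj
      rw [Fintype.card_coe, Fintype.card_fin, hS.1] at this
      exact this
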